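/- Let λ : ℝ^N → ℝ be an integrable, compactly supported filter that is not zero almost everywhere, and let T_g, T_h : ℝ^N → ℝ^N be invertible linear maps. If 𝒯_{T_g} (Λ_λ (𝒯_{T_h} f)) = Λ_λ f for all locally integrable f, then T_g = T_h⁻¹ and λ(y) = |det T_h| · λ(T_h y) for almost every y. -/

import Mathlib

open MeasureTheory

/-- Let `λ` be an integrable compactly supported filter which is not zero
almost everywhere and let `T_g, T_h` be invertible linear maps. If
`𝒯_{T_g} (Λ_λ (𝒯_{T_h} f)) = Λ_λ f` for all locally integrable `f`, then `T_g = T_h⁻¹` and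
`λ(y) = |det T_h| · λ(T_h y)` for almost every `y`. -/
theorem single_layer_alignment_conditions {N : ℕ}
    (lam : EuclideanSpace ℝ (Fin N) → ℝ)
    (hlam_int : Integrable lam) (hlam_supp : HasCompactSupport lam)
    (hlam_ne : ¬ lam =ᵐ[volume] 0)
    (Tg Th : EuclideanSpace ℝ (Fin N) ≃ₗ[ℝ] EuclideanSpace ℝ (Fin N))
    (h : ∀ f : EuclideanSpace ℝ (Fin N) → ℝ, LocallyIntegrable f →
      ∀ x, (∫ y, f (Th.symm y) * lam (Tg.symm x - y)) = ∫ y, f y * lam (x - y)) :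
    (∀ x, Tg x = Th.symm x) ∧
    (∀ᵐ y ∂volume, lam y = |LinearMap.det Th.toLinearMap| * lam (Th y)) := by
  classical
  have hdet : LinearMap.det Th.toLinearMap ≠ 0 := Th.isUnit_det'.ne_zero
  set D : ℝ := |LinearMap.det Th.toLinearMap| with hD_def
  have hD_ne : D ≠ 0 := abs_ne_zero.mpr hdet
  have hD_pos : 0 < D := abs_pos.mpr hdet
  let eTh : EuclideanSpace ℝ (Fin N) ≃ᵐ EuclideanSpace ℝ (Fin N) :=
    Th.toContinuousLinearEquiv.toHomeomorph.toMeasurableEquiv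
  have hmap : volume.map eTh = ENNReal.ofReal |(LinearMap.det Th.toLinearMap)⁻¹| • volume :=
    Measure.map_linearMap_addHaar_eq_smul_addHaar volume hdet
  have hofReal_ne : ENNReal.ofReal |(LinearMap.det Th.toLinearMap)⁻¹| ≠ 0 := by
    simp only [ne_eq, ENNReal.ofReal_eq_zero, not_le]
    exact abs_pos.mpr (inv_ne_zero hdet)
  -- quasi measure preserving of Th.symm
  have hdet2 : LinearMap.det Th.symm.toLinearMap ≠ 0 := Th.symm.isUnit_det'.ne_zero
  let eThs : EuclideanSpace ℝ (Fin N) ≃ᵐ EuclideanSpace ℝ (Fin N) :=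
    Th.symm.toContinuousLinearEquiv.toHomeomorph.toMeasurableEquiv
  have hmap2 : volume.map eThs = ENNReal.ofReal |(LinearMap.det Th.symm.toLinearMap)⁻¹| • volume :=
    Measure.map_linearMap_addHaar_eq_smul_addHaar volume hdet2
  have hofReal_ne2 : ENNReal.ofReal |(LinearMap.det Th.symm.toLinearMap)⁻¹| ≠ 0 := by
    simp only [ne_eq, ENNReal.ofReal_eq_zero, not_le]
    exact abs_pos.mpr (inv_ne_zero hdet2)
  have hqThs : Measure.QuasiMeasurePreserving (⇑Th.symm)
      (volume : Measure (EuclideanSpace ℝ (Fin N))) volume := by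
    refine ⟨eThs.measurable, ?_⟩
    rw [show Measure.map (⇑Th.symm) volume = Measure.map (⇑eThs) volume from rfl, hmap2]
    exact Measure.AbsolutelyContinuous.rfl.smul_left _
  -- change of variables for integrals
  have hIcomp : ∀ F : EuclideanSpace ℝ (Fin N) → ℝ,
      (∫ y, F y) = D * ∫ z, F (Th z) := by
    intro F
    have h1 : (∫ y, F y ∂(Measure.map (⇑eTh) volume)) = ∫ z, F (eTh z) :=
      integral_map_equiv eTh F
    rw [hmap, integral_smul_measure, ENNReal.toReal_ofReal (abs_nonneg _), abs_inv] at h1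
    have h2 : (∫ z, F (eTh z)) = ∫ z, F (Th z) := rfl
    rw [h2] at h1
    rw [← h1, smul_eq_mul, ← mul_assoc, mul_inv_cancel₀ hD_ne, one_mul]
  -- integrability of compositions with Th
  have hIntComp : ∀ F : EuclideanSpace ℝ (Fin N) → ℝ, Integrable F volume →
      Integrable (fun z => F (Th z)) volume := by
    intro F hF
    have h' : Integrable F (Measure.map (⇑eTh) volume) := by
      rw [hmap]
      exact (integrable_smul_measure hofReal_ne ENNReal.ofReal_ne_top).mpr hF
    exact (integrable_map_equiv eTh F).mp h'
  -- the main a.e. identity, for each x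
  have key1 : ∀ x, ∀ᵐ z ∂(volume : Measure (EuclideanSpace ℝ (Fin N))),
      lam (x - z) = D * lam (Tg.symm x - Th z) := by
    intro x
    have hA : Integrable (fun z => lam (Tg.symm x - Th z)) volume :=
      hIntComp _ (hlam_int.comp_sub_left (Tg.symm x))
    have hB : Integrable (fun z => lam (x - z)) volume := hlam_int.comp_sub_left x
    have hg : Integrable (fun z => D * lam (Tg.symm x - Th z) - lam (x - z)) volume :=
      (hA.const_mul D).sub hB
    have h0 : (fun z => D * lam (Tg.symm x - Th z) - lam (x - z)) =ᵐ[volume] 0 := by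
      apply hg.ae_eq_zero_of_forall_setIntegral_eq_zero
      intro s hs hμs
      have hf_int : Integrable (s.indicator (fun _ => (1 : ℝ))) volume := by
        rw [integrable_indicator_iff hs]
        exact (integrableOn_const_iff).mpr (Or.inr hμs)
      have hloc : LocallyIntegrable (s.indicator (fun _ => (1 : ℝ))) volume :=
        hf_int.locallyIntegrable
      have hx := h _ hloc x
      rw [hIcomp] at hx
      simp only [LinearEquiv.symm_apply_apply] at hx
      have e1 : ∀ A : EuclideanSpace ℝ (Fin N) → ℝ,
          (fun z => s.indicator (fun _ => (1 : ℝ)) z * A z) = s.indicator A := by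
        intro A; funext z; by_cases hz : z ∈ s <;> simp [hz]
      rw [e1, e1, integral_indicator hs, integral_indicator hs] at hx
      rw [integral_sub (hA.const_mul D).integrableOn hB.integrableOn, integral_const_mul, hx,
        sub_self]
    filter_upwards [h0] with z hz
    have hz' : D * lam (Tg.symm x - Th z) - lam (x - z) = 0 := hz
    linarith
  -- second conclusion
  have part2 : ∀ᵐ y ∂(volume : Measure (EuclideanSpace ℝ (Fin N))),
      lam y = D * lam (Th y) := by
    have h0 := key1 0
    have h1 := (Measure.measurePreserving_neg
      (volume : Measure (EuclideanSpace ℝ (Fin N)))).quasiMeasurePreserving.ae h0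
    filter_upwards [h1] with y hy
    simpa using hy
  -- first conclusion: Th x = Tg.symm x for all x
  have hTh_eq : ∀ x, Th x = Tg.symm x := by
    intro x
    have k2 : ∀ᵐ z ∂(volume : Measure (EuclideanSpace ℝ (Fin N))),
        lam (x - z) = D * lam (Th x - Th z) := by
      have := (Measure.measurePreserving_sub_left
        (volume : Measure (EuclideanSpace ℝ (Fin N))) x).quasiMeasurePreserving.ae part2
      filter_upwards [this] with z hz
      rw [hz, map_sub]
    have k3 : ∀ᵐ z ∂(volume : Measure (EuclideanSpace ℝ (Fin N))),
        lam (Tg.symm x - Th z) = lam (Th x - Th z) := by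
      filter_upwards [key1 x, k2] with z h1 h2
      exact mul_left_cancel₀ hD_ne (h1.symm.trans h2)
    have k4 : ∀ᵐ w ∂(volume : Measure (EuclideanSpace ℝ (Fin N))),
        lam (Tg.symm x - w) = lam (Th x - w) := by
      have := hqThs.ae k3
      filter_upwards [this] with w hw
      simpa using hw
    set v := Th x - Tg.symm x with hv
    have k5 : ∀ᵐ u ∂(volume : Measure (EuclideanSpace ℝ (Fin N))),
        lam u = lam (u + v) := by
      have := (Measure.measurePreserving_sub_left
        (volume : Measure (EuclideanSpace ℝ (Fin N)))
        (Tg.symm x)).quasiMeasurePreserving.ae k4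
      filter_upwards [this] with u hu
      have e1 : Tg.symm x - (Tg.symm x - u) = u := by abel
      have e2 : Th x - (Tg.symm x - u) = u + v := by rw [hv]; abel
      rw [e1, e2] at hu
      exact hu
    by_contra hne
    have hv_ne : v ≠ 0 := sub_ne_zero.mpr hne
    have iter : ∀ n : ℕ, ∀ᵐ u ∂(volume : Measure (EuclideanSpace ℝ (Fin N))),
        lam u = lam (u + (n : ℝ) • v) := by
      intro n
      induction n with
      | zero => simp
      | succ n ih =>
        have h1 := (measurePreserving_add_right
          (volume : Measure (EuclideanSpace ℝ (Fin N))) v).quasiMeasurePreserving.ae ih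
        filter_upwards [k5, h1] with u hu h1u
        rw [hu, h1u]
        congr 1
        push_cast
        rw [add_smul, one_smul]
        abel
    obtain ⟨R, hR⟩ := (hlam_supp : IsCompact (tsupport lam)).isBounded.subset_closedBall 0
    have hvpos : (0 : ℝ) < ‖v‖ := norm_pos_iff.mpr hv_ne
    obtain ⟨n, hn⟩ := exists_nat_gt ((2 * R + 1) / ‖v‖)
    have hnlarge : 2 * R + 1 < (n : ℝ) * ‖v‖ := by
      rw [div_lt_iff₀ hvpos] at hn; linarith
    have hzero : lam =ᵐ[volume] 0 := by
      filter_upwards [iter n] with u hu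
      simp only [Pi.zero_apply]
      by_cases hcase : ‖u‖ ≤ R
      · have hout : u + (n : ℝ) • v ∉ tsupport lam := by
          intro hmem
          have hball := hR hmem
          rw [Metric.mem_closedBall, dist_zero_right] at hball
          have h2 : ‖(n : ℝ) • v‖ ≤ ‖u + (n : ℝ) • v‖ + ‖u‖ := by
            calc ‖(n : ℝ) • v‖ = ‖(u + (n : ℝ) • v) - u‖ := by congr 1; abel
              _ ≤ ‖u + (n : ℝ) • v‖ + ‖u‖ := norm_sub_le _ _
          rw [norm_smul, Real.norm_natCast] at h2
          linarith
        rw [hu]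
        exact image_eq_zero_of_notMem_tsupport hout
      · have hout : u ∉ tsupport lam := by
          intro hmem
          have hball := hR hmem
          rw [Metric.mem_closedBall, dist_zero_right] at hball
          exact hcase hball
        exact image_eq_zero_of_notMem_tsupport hout
    exact hlam_ne hzero
  refine ⟨?_, part2⟩
  intro x
  have h1 := hTh_eq (Th.symm x)
  rw [LinearEquiv.apply_symm_apply] at h1
  nth_rewrite 1 [h1]
  exact Tg.apply_symm_apply _
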